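/- If p is Lipschitz continuous with Lipschitz constant L_p, then for all x, x', y ∈ ℝ^N one has |K(x,y) − K(x',y)| ≤ L_p·‖x − x'‖·√(K(y,y)). -/

import Mathlib

open MeasureTheory

/-- The common-neighbor kernel `K(x,y) = ∫ p(‖x−z‖)·p(‖y−z‖) dμ(z)`. -/
noncomputable def commonK {N : ℕ} (μ : Measure (EuclideanSpace ℝ (Fin N)))
    (p : ℝ → ℝ) (x y : EuclideanSpace ℝ (Fin N)) : ℝ :=
  ∫ z, p ‖x - z‖ * p ‖y - z‖ ∂μ

/-- if `p` is Lipschitz with constant `L_p`, then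
`|K(x,y) − K(x',y)| ≤ L_p · ‖x − x'‖ · √(K(y,y))`. -/
theorem abs_commonK_sub_commonK_le {N : ℕ} (hN : 0 < N)
    (μ : Measure (EuclideanSpace ℝ (Fin N))) [IsProbabilityMeasure μ]
    (p : ℝ → ℝ) (hpmeas : Measurable p)
    (hp0 : ∀ t : ℝ, 0 ≤ t → 0 ≤ p t) (hp1 : ∀ t : ℝ, 0 ≤ t → p t ≤ 1)
    (Lp : ℝ) (hLip : ∀ a b : ℝ, 0 ≤ a → 0 ≤ b → |p a - p b| ≤ Lp * |a - b|)
    (x x' y : EuclideanSpace ℝ (Fin N)) :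
    |commonK μ p x y - commonK μ p x' y| ≤
      Lp * ‖x - x'‖ * Real.sqrt (commonK μ p y y) := by
  have hLp : 0 ≤ Lp := by
    have := hLip 0 1 le_rfl zero_le_one
    simpa using (abs_nonneg (p 0 - p 1)).trans this
  -- measurability of the basic functions
  have hmeas : ∀ w : EuclideanSpace ℝ (Fin N), Measurable (fun z => p ‖w - z‖) := by
    intro w
    exact hpmeas.comp ((measurable_const.sub measurable_id).norm)
  have hbd : ∀ w z : EuclideanSpace ℝ (Fin N), p ‖w - z‖ ∈ Set.Icc (0:ℝ) 1 := by
    intro w z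
    exact ⟨hp0 _ (norm_nonneg _), hp1 _ (norm_nonneg _)⟩
  have hint : ∀ w w' : EuclideanSpace ℝ (Fin N),
      Integrable (fun z => p ‖w - z‖ * p ‖w' - z‖) μ := by
    intro w w'
    refine Integrable.mono' (integrable_const 1)
      ((hmeas w).mul (hmeas w')).aestronglyMeasurable ?_
    filter_upwards with z
    have h1 := hbd w z; have h2 := hbd w' z
    rw [Real.norm_of_nonneg (mul_nonneg h1.1 h2.1)]
    calc p ‖w - z‖ * p ‖w' - z‖ ≤ 1 * 1 := mul_le_mul h1.2 h2.2 h2.1 zero_le_one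
    _ = 1 := by ring
  have hintg : Integrable (fun z => p ‖y - z‖) μ := by
    refine Integrable.mono' (integrable_const 1) (hmeas y).aestronglyMeasurable ?_
    filter_upwards with z
    rw [Real.norm_of_nonneg (hbd y z).1]; exact (hbd y z).2
  -- step 1: the difference is an integral
  have hdiff : commonK μ p x y - commonK μ p x' y
      = ∫ z, (p ‖x - z‖ - p ‖x' - z‖) * p ‖y - z‖ ∂μ := by
    rw [commonK, commonK, ← integral_sub (hint x y) (hint x' y)]
    congr 1; funext z; ring
  -- step 2: bound the integrand
  have hptw : ∀ z, |(p ‖x - z‖ - p ‖x' - z‖) * p ‖y - z‖|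
      ≤ Lp * ‖x - x'‖ * p ‖y - z‖ := by
    intro z
    rw [abs_mul, abs_of_nonneg (hbd y z).1]
    refine mul_le_mul_of_nonneg_right ?_ (hbd y z).1
    calc |p ‖x - z‖ - p ‖x' - z‖| ≤ Lp * |‖x - z‖ - ‖x' - z‖| :=
          hLip _ _ (norm_nonneg _) (norm_nonneg _)
    _ ≤ Lp * ‖x - x'‖ := by
        refine mul_le_mul_of_nonneg_left ?_ hLp
        have := abs_norm_sub_norm_le (x - z) (x' - z)
        simpa [sub_sub_sub_cancel_right] using this
  have h1 : |commonK μ p x y - commonK μ p x' y|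
      ≤ Lp * ‖x - x'‖ * ∫ z, p ‖y - z‖ ∂μ := by
    rw [hdiff]
    calc |∫ z, (p ‖x - z‖ - p ‖x' - z‖) * p ‖y - z‖ ∂μ|
        ≤ ∫ z, |(p ‖x - z‖ - p ‖x' - z‖) * p ‖y - z‖| ∂μ := by
          simpa [Real.norm_eq_abs, abs_mul] using
            norm_integral_le_integral_norm (μ := μ) (fun z => (p ‖x - z‖ - p ‖x' - z‖) * p ‖y - z‖)
      _ ≤ ∫ z, Lp * ‖x - x'‖ * p ‖y - z‖ ∂μ := by
          refine integral_mono_of_nonneg (Filter.Eventually.of_forall fun z => abs_nonneg _)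
            (hintg.const_mul _) (Filter.Eventually.of_forall hptw)
      _ = Lp * ‖x - x'‖ * ∫ z, p ‖y - z‖ ∂μ := integral_const_mul _ _
  -- step 3: Cauchy–Schwarz: ∫ g ≤ √(∫ g²)
  have hK : ∫ z, p ‖y - z‖ ∂μ ≤ Real.sqrt (commonK μ p y y) := by
    have hmem : MemLp (fun z => p ‖y - z‖) (ENNReal.ofReal 2) μ := by
      refine MemLp.of_bound (hmeas y).aestronglyMeasurable 1 ?_
      filter_upwards with z
      rw [Real.norm_of_nonneg (hbd y z).1]; exact (hbd y z).2
    have hone : MemLp (fun _ : EuclideanSpace ℝ (Fin N) => (1:ℝ)) (ENNReal.ofReal 2) μ :=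
      memLp_const 1
    have hconj : Real.HolderConjugate 2 2 := Real.holderConjugate_iff.mpr ⟨one_lt_two, by norm_num⟩
    have hCS := integral_mul_le_Lp_mul_Lq_of_nonneg hconj
      (Filter.Eventually.of_forall fun z => (hbd y z).1)
      (Filter.Eventually.of_forall fun _ => (zero_le_one : (0:ℝ) ≤ 1)) hmem hone
    simp only [mul_one, one_pow] at hCS
    have h2 : (∫ z, p ‖y - z‖ ^ (2:ℝ) ∂μ) = commonK μ p y y := by
      rw [commonK]
      congr 1; funext z
      rw [Real.rpow_two, sq]
    have h3 : (∫ _z : EuclideanSpace ℝ (Fin N), (1:ℝ) ^ (2:ℝ) ∂μ) = 1 := by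
      simp
    rw [h2, h3] at hCS
    calc ∫ z, p ‖y - z‖ ∂μ ≤ commonK μ p y y ^ (1/2 : ℝ) * 1 ^ (1/2 : ℝ) := hCS
      _ = Real.sqrt (commonK μ p y y) := by
          rw [Real.one_rpow, mul_one, Real.sqrt_eq_rpow]
  calc |commonK μ p x y - commonK μ p x' y| ≤ Lp * ‖x - x'‖ * ∫ z, p ‖y - z‖ ∂μ := h1
    _ ≤ Lp * ‖x - x'‖ * Real.sqrt (commonK μ p y y) := by
        exact mul_le_mul_of_nonneg_left hK (by positivity)
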